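/- Suppose α = (m/n)π for positive integers m, n (with α ∈ (0,π/6)), let θ ∈ (0,π) be such that θ/π is irrational, and let s ∈ [0,2π). Let ν be the Markov path measure on C(θ)^ℕ with initial distribution δ_θ and transition kernel K(θ',·) = Σ_{i=1}^4 p_i(θ') δ_{T_i(θ')}. Then for ν-almost every sequence of angles (θ_k)_{k≥1}, the corresponding trajectory of the random billiard map in the circle is dense in the boundary: the sequence of collision points (s + 2Σ_{k=1}^n θ_k mod 2π)_{n≥1} is dense in [0,2π). -/

import Mathlib

open Real MeasureTheory Set Filter Topology
open scoped ENNReal NNReal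

noncomputable section

namespace RandomBilliard

/-- The four maps `T_1, …, T_4` of the Feres random map
(index `i : Fin 4` stands for `T_{i+1}`). -/
def T (α : ℝ) : Fin 4 → ℝ → ℝ
  | 0 => fun θ => θ + 2 * α
  | 1 => fun θ => -θ + 2 * π - 4 * α
  | 2 => fun θ => θ - 2 * α
  | 3 => fun θ => -θ + 4 * α

/-- `u_a(θ) = (1/2)(1 + tan a / tan θ)`. -/
def u (a θ : ℝ) : ℝ := 1 / 2 * (1 + Real.tan a / Real.tan θ)

/-- The probabilities `p_1, …, p_4` of the Feres random map
(index `i : Fin 4` stands for `p_{i+1}`). -/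
def p (α : ℝ) : Fin 4 → ℝ → ℝ
  | 0 => fun θ =>
      if θ < α then 1
      else if θ < π - 3 * α then u α θ
      else if θ < π - 2 * α then 2 * Real.cos (2 * α) * u (2 * α) θ
      else 0
  | 1 => fun θ =>
      if θ < π - 3 * α then 0
      else if θ < π - 2 * α then u α θ - 2 * Real.cos (2 * α) * u (2 * α) θ
      else if θ < π - α then u α θ
      else 0
  | 2 => fun θ =>
      if θ < 2 * α then 0
      else if θ < 3 * α then 2 * Real.cos (2 * α) * u (2 * α) (-θ)
      else if θ < π - α then u α (-θ)
      else 1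
  | 3 => fun θ =>
      if θ < α then 0
      else if θ < 2 * α then u α (-θ)
      else if θ < 3 * α then u α (-θ) - 2 * Real.cos (2 * α) * u (2 * α) (-θ)
      else 0

/-- `iterT α x k θ = T_x^{(k)}(θ) = T_{x_k} ∘ ⋯ ∘ T_{x_1}(θ)`
(the term `x j : Fin 4` stands for the symbol `x_{j+1}`). -/
def iterT (α : ℝ) (x : ℕ → Fin 4) : ℕ → ℝ → ℝ
  | 0 => fun θ => θ
  | k + 1 => fun θ => T α (x k) (iterT α x k θ)

/-- `Σ_θ`: the admissible symbol sequences for `θ`, i.e. those whose every finite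
prefix has positive probability. -/
def SigmaTheta (α θ : ℝ) : Set (ℕ → Fin 4) :=
  {x | ∀ k : ℕ, 0 < ∏ j ∈ Finset.range k, p α (x j) (iterT α x j θ)}

/-- `C(θ)`: all possible future images of `θ` under the Feres random map. -/
def Cset (α θ : ℝ) : Set ℝ :=
  {θ' | θ' ∈ Set.Ioo 0 π ∧
    ∃ (x : ℕ → Fin 4) (k : ℕ), x ∈ SigmaTheta α θ ∧ iterT α x k θ = θ'}

/-- The probability measure `μ(A) = (1/2) ∫_A sin θ dθ` on `[0, π]`. -/
def mu0 : Measure ℝ :=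
  (volume.restrict (Set.Icc 0 π)).withDensity fun θ => ENNReal.ofReal (1 / 2 * Real.sin θ)

/-- One step of the evolution of a measure under the Feres random map:
`(stepMeasure α ν)(A) = ∫ K(θ, A) dν(θ)`, where `K(θ, A) = Σ_i p_i(θ) 1_A(T_i θ)`. -/
def stepMeasure (α : ℝ) (ν : Measure ℝ) : Measure ℝ :=
  ∑ i : Fin 4, Measure.map (T α i) (ν.withDensity fun θ => ENNReal.ofReal (p α i θ))

/-- One step of the evolution of a measure under the random billiard map in the circle
`F̄(s, θ) = (s + 2 T_i(θ) mod 2π, T_i(θ))` with probability `p_i(θ)`. -/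
def circleStep (α : ℝ) (ν : Measure (ℝ × ℝ)) : Measure (ℝ × ℝ) :=
  ∑ i : Fin 4,
    Measure.map
      (fun q : ℝ × ℝ => (toIcoMod Real.two_pi_pos 0 (q.1 + 2 * T α i q.2), T α i q.2))
      (ν.withDensity fun q => ENNReal.ofReal (p α i q.2))

/-- The transition kernel `K(θ', ·) = Σ_i p_i(θ') δ_{T_i(θ')}` of the Feres random map. -/
def feresKernel (α : ℝ) (t : ℝ) : Measure ℝ :=
  ∑ i : Fin 4, ENNReal.ofReal (p α i t) • Measure.dirac (T α i t)

/-- `k`-step iterates of a transition kernel. -/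
def kerIterate (κ : ℝ → Measure ℝ) : ℕ → ℝ → Measure ℝ
  | 0 => fun t => Measure.dirac t
  | k + 1 => fun t => (κ t).bind (kerIterate κ k)

/-- The probability that a Markov chain with kernel `κ` started at `t` satisfies
`θ_0 ∈ B 0, …, θ_n ∈ B n`. -/
def cylProb (κ : ℝ → Measure ℝ) : ℕ → (ℕ → Set ℝ) → ℝ → ℝ≥0∞
  | 0 => fun B t => Set.indicator (B 0) (fun _ => (1 : ℝ≥0∞)) t
  | n + 1 => fun B t =>
      Set.indicator (B 0)
        (fun _ => ∫⁻ t', cylProb κ n (fun k => B (k + 1)) t' ∂(κ t)) t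

/-- `ν` is the Markov path measure on `ℕ → ℝ` (given by the Ionescu–Tulcea construction)
with initial distribution `ρ` and transition kernel `κ`, characterized by its values
on cylinder sets. -/
def IsMarkovPathMeasure (κ : ℝ → Measure ℝ) (ρ : Measure ℝ) (ν : Measure (ℕ → ℝ)) : Prop :=
  ∀ (n : ℕ) (B : ℕ → Set ℝ), (∀ k, MeasurableSet (B k)) →
    ν {ω | ∀ k ≤ n, ω k ∈ B k} = ∫⁻ t, cylProb κ n B t ∂ρ

/-- The shift map on sequences. -/
def shift : (ℕ → ℝ) → ℕ → ℝ := fun ω n => ω (n + 1)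

/-- Aperiodicity of the Markov chain with kernel `κ` on the state space `S`:
for every state, every common divisor of the return times having positive
probability equals `1` (i.e. every state has period 1). -/
def AperiodicChain (κ : ℝ → Measure ℝ) (S : Set ℝ) : Prop :=
  ∀ t ∈ S, ∀ d : ℕ, (∀ k : ℕ, 1 ≤ k → 0 < kerIterate κ k t {t} → d ∣ k) → d = 1

end RandomBilliard


namespace RandomBilliard

section Trig
variable {α : ℝ} (hα : α ∈ Set.Ioo 0 (π / 6))

lemma u_neg (a t : ℝ) : u a (-t) = 1 / 2 * (1 - Real.tan a / Real.tan t) := by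
  simp [u, Real.tan_neg, div_neg]; ring

lemma u_add_u_neg (a t : ℝ) : u a t + u a (-t) = 1 := by
  rw [u, u_neg]; ring

lemma tan_pi_sub (x : ℝ) : Real.tan (π - x) = -Real.tan x := by
  simp [Real.tan_eq_sin_div_cos, Real.sin_pi_sub, Real.cos_pi_sub, div_neg, neg_div]

lemma u_congr_tan {t t' : ℝ} (h : Real.tan t = Real.tan t') (a : ℝ) : u a t = u a t' := by
  simp [u, h]

/-- monotone version of tan on [0, π/2) -/
lemma tan_le_tan_nn {x y : ℝ} (hx : 0 ≤ x) (hxy : x ≤ y) (hy : y < π / 2) :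
    Real.tan x ≤ Real.tan y := by
  rcases eq_or_lt_of_le hxy with rfl | h
  · exact le_refl _
  · exact (Real.tan_lt_tan_of_nonneg_of_lt_pi_div_two hx hy h).le

include hα in
lemma tan_alpha_pos : 0 < Real.tan α :=
  Real.tan_pos_of_pos_of_lt_pi_div_two hα.1 (by linarith [hα.2, Real.pi_pos])

omit hα in
lemma u_pos {a t : ℝ} (ha : 0 < a) (ha2 : a < π / 2) (ht : 0 < t) (h : t + a < π) :
    0 < u a t := by
  have hpi := Real.pi_pos
  rcases lt_trichotomy t (π / 2) with h1 | h1 | h1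
  · have h2 : 0 < Real.tan t := Real.tan_pos_of_pos_of_lt_pi_div_two ht h1
    have h3 : 0 < Real.tan a := Real.tan_pos_of_pos_of_lt_pi_div_two ha ha2
    have : 0 < Real.tan a / Real.tan t := div_pos h3 h2
    rw [u]; nlinarith
  · rw [u, h1, Real.tan_pi_div_two]; norm_num
  · have hs : Real.tan t = -Real.tan (π - t) := by rw [tan_pi_sub]; ring
    have h4 : a < π - t := by linarith
    have h5 : π - t < π / 2 := by linarith
    have h6 : Real.tan a < Real.tan (π - t) :=
      Real.tan_lt_tan_of_nonneg_of_lt_pi_div_two ha.le h5 h4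
    have h7 : 0 < Real.tan (π - t) := Real.tan_pos_of_pos_of_lt_pi_div_two (by linarith) h5
    rw [u, hs]
    have : Real.tan a / -Real.tan (π - t) = -(Real.tan a / Real.tan (π - t)) := by ring
    rw [this]
    have : Real.tan a / Real.tan (π - t) < 1 := (div_lt_one h7).2 h6
    nlinarith

omit hα in
lemma u_nonneg {a t : ℝ} (ha : 0 < a) (ha2 : a < π / 2) (ht : 0 < t) (h : t + a ≤ π) :
    0 ≤ u a t := by
  rcases eq_or_lt_of_le h with he | h
  · -- t = π - a : u a t = 0
    have ht2 : t = π - a := by linarith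
    subst ht2
    have htan : Real.tan (π - a) = -Real.tan a := tan_pi_sub a
    have hne : Real.tan a ≠ 0 := (Real.tan_pos_of_pos_of_lt_pi_div_two ha ha2).ne'
    rw [u, htan]
    rw [div_neg, div_self hne]
    norm_num
  · exact (u_pos ha ha2 ht h).le

omit hα in
lemma u_neg_pos {a t : ℝ} (ha : 0 < a) (ha2 : a < π / 2) (ht : a < t) (htp : t < π) :
    0 < u a (-t) := by
  have hpi := Real.pi_pos
  rw [u_neg]
  rcases lt_trichotomy t (π / 2) with h1 | h1 | h1
  · have h2 : Real.tan a < Real.tan t :=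
      Real.tan_lt_tan_of_nonneg_of_lt_pi_div_two ha.le h1 ht
    have h3 : 0 < Real.tan t := Real.tan_pos_of_pos_of_lt_pi_div_two (by linarith) h1
    have : Real.tan a / Real.tan t < 1 := (div_lt_one h3).2 h2
    nlinarith
  · rw [h1, Real.tan_pi_div_two]; norm_num
  · have hs : Real.tan t = -Real.tan (π - t) := by rw [tan_pi_sub]; ring
    have h7 : 0 < Real.tan (π - t) :=
      Real.tan_pos_of_pos_of_lt_pi_div_two (by linarith) (by linarith)
    have h3 : 0 < Real.tan a := Real.tan_pos_of_pos_of_lt_pi_div_two ha ha2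
    rw [hs]
    have : Real.tan a / -Real.tan (π - t) = -(Real.tan a / Real.tan (π - t)) := by ring
    rw [this]
    have : 0 < Real.tan a / Real.tan (π - t) := div_pos h3 h7
    nlinarith

omit hα in
lemma u_neg_nonneg {a t : ℝ} (ha : 0 < a) (ha2 : a < π / 2) (ht : a ≤ t) (htp : t < π) :
    0 ≤ u a (-t) := by
  rcases eq_or_lt_of_le ht with rfl | h
  · rw [u_neg]
    have hne : Real.tan a ≠ 0 := by
      have := Real.tan_pos_of_pos_of_lt_pi_div_two ha ha2; linarith
    rw [div_self hne]; norm_num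
  · exact (u_neg_pos ha ha2 h htp).le

end Trig

section Main
variable {α : ℝ} (hα : α ∈ Set.Ioo 0 (π / 6))

omit hα in
lemma iden' (hc : Real.cos α ≠ 0) :
    (Real.sin (2 * α) - Real.tan α / 2) * Real.cos (3 * α)
      = (Real.cos (2 * α) - 1 / 2) * Real.sin (3 * α) := by
  have hs := Real.sin_sq_add_cos_sq α
  have ht : Real.tan α * Real.cos α = Real.sin α := by
    rw [Real.tan_eq_sin_div_cos]; field_simp
  rw [Real.sin_two_mul, Real.cos_two_mul, Real.sin_three_mul, Real.cos_three_mul]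
  linear_combination (4 * Real.sin α * (2 * Real.cos α ^ 2 - 3 / 2)) * hs +
    (-(4 * Real.cos α ^ 2 - 3) / 2) * ht

include hα

lemma iden :
    Real.sin (2 * α) - Real.tan α / 2 = (Real.cos (2 * α) - 1 / 2) * Real.tan (3 * α) := by
  have hpi := Real.pi_pos
  have hc : Real.cos α ≠ 0 := by
    have := Real.cos_pos_of_mem_Ioo (show α ∈ Set.Ioo (-(π/2)) (π/2) by
      constructor <;> [linarith [hα.1]; linarith [hα.2]])
    linarith
  have hc3 : Real.cos (3 * α) ≠ 0 := by
    have := Real.cos_pos_of_mem_Ioo (show 3 * α ∈ Set.Ioo (-(π/2)) (π/2) by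
      constructor <;> [linarith [hα.1]; linarith [hα.2]])
    linarith
  have h := iden' hc
  rw [Real.tan_eq_sin_div_cos (3 * α)]
  rw [← mul_div_assoc, eq_div_iff hc3]
  linear_combination h

lemma cos2_tan2 : Real.cos (2 * α) * Real.tan (2 * α) = Real.sin (2 * α) := by
  have hpi := Real.pi_pos
  have hc : Real.cos (2 * α) ≠ 0 := by
    have := Real.cos_pos_of_mem_Ioo (show 2 * α ∈ Set.Ioo (-(π/2)) (π/2) by
      constructor <;> [linarith [hα.1]; linarith [hα.2]])
    linarith
  rw [Real.tan_eq_sin_div_cos]; field_simp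

lemma cos2_gt : 1 / 2 < Real.cos (2 * α) := by
  have hpi := Real.pi_pos
  have h := Real.cos_lt_cos_of_nonneg_of_le_pi (by linarith [hα.1] : (0:ℝ) ≤ 2 * α)
    (by linarith : π / 3 ≤ π) (by linarith [hα.2] : 2 * α < π / 3)
  rw [Real.cos_pi_div_three] at h; exact h

lemma cos2_pos : 0 < Real.cos (2 * α) := by linarith [cos2_gt hα]

lemma exprM {t : ℝ} (h2 : Real.tan t ≠ 0) :
    u α (-t) - 2 * Real.cos (2 * α) * u (2 * α) (-t)
      = (Real.cos (2 * α) - 1 / 2) * (Real.tan (3 * α) / Real.tan t - 1) := by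
  have h1 := cos2_tan2 hα
  have h3 := iden hα
  rw [u_neg, u_neg]
  field_simp
  rw [mul_comm α 3]
  nlinarith [h1, h3]

lemma exprP {t : ℝ} (h2 : Real.tan t ≠ 0) :
    u α t - 2 * Real.cos (2 * α) * u (2 * α) t
      = (Real.cos (2 * α) - 1 / 2) * (-1 - Real.tan (3 * α) / Real.tan t) := by
  have h1 := cos2_tan2 hα
  have h3 := iden hα
  rw [u, u]
  field_simp
  rw [mul_comm α 3]
  nlinarith [h1, h3]


omit hα in
lemma tan_neg_of_gt {t : ℝ} (h1 : π / 2 < t) (h2 : t < π) : Real.tan t < 0 := by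
  have : Real.tan t = -Real.tan (π - t) := by rw [tan_pi_sub]; ring
  rw [this, neg_lt, neg_zero]
  exact Real.tan_pos_of_pos_of_lt_pi_div_two (by linarith) (by linarith)

omit hα in
lemma tan_pos_lt {t : ℝ} (h1 : 0 < t) (h2 : t < π / 2) : 0 < Real.tan t :=
  Real.tan_pos_of_pos_of_lt_pi_div_two h1 h2

/-- nonnegativity of the four probabilities on `(0, π)` -/
lemma p_nonneg {t : ℝ} (ht : t ∈ Set.Ioo 0 π) (i : Fin 4) : 0 ≤ p α i t := by
  obtain ⟨ht0, htπ⟩ := ht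
  have hα0 := hα.1
  have hα6 := hα.2
  have hpi := Real.pi_pos
  have h2c := cos2_gt hα
  fin_cases i
  · show 0 ≤ p α 0 t
    simp only [p]
    split_ifs with h1 h2 h3
    · norm_num
    · exact u_nonneg hα0 (by linarith) ht0 (by linarith)
    · have := u_pos (show 0 < 2*α by linarith) (by linarith) ht0 (by linarith)
      nlinarith
    · exact le_rfl
  · show 0 ≤ p α 1 t
    simp only [p]
    split_ifs with h1 h2 h3
    · exact le_rfl
    · -- t ∈ [π-3α, π-2α)
      have htan : Real.tan t ≠ 0 := by
        have : π / 2 < t := by linarith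
        exact (tan_neg_of_gt this htπ).ne
      rw [show u α t - 2 * Real.cos (2*α) * u (2*α) t
            = (Real.cos (2*α) - 1/2) * (-1 - Real.tan (3*α) / Real.tan t) from exprP hα htan]
      have hs : Real.tan t = -Real.tan (π - t) := by rw [tan_pi_sub]; ring
      have h5 : π - t ≤ 3 * α := by linarith
      have h6 : 0 < π - t := by linarith
      have h7 : 0 < Real.tan (π - t) := tan_pos_lt h6 (by linarith)
      have h8 : Real.tan (π - t) ≤ Real.tan (3*α) := tan_le_tan_nn h6.le h5 (by linarith)
      have h9 : -1 - Real.tan (3*α) / Real.tan t ≥ 0 := by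
        rw [hs, div_neg]
        have : 1 ≤ Real.tan (3*α) / Real.tan (π - t) := (one_le_div h7).2 h8
        linarith
      nlinarith
    · exact u_nonneg hα0 (by linarith) ht0 (by linarith)
    · exact le_rfl
  · show 0 ≤ p α 2 t
    simp only [p]
    split_ifs with h1 h2 h3
    · exact le_rfl
    · have := u_neg_nonneg (show 0 < 2*α by linarith) (by linarith)
        (show 2*α ≤ t by linarith) htπ
      nlinarith
    · exact u_neg_nonneg hα0 (by linarith) (by linarith) htπ
    · norm_num
  · show 0 ≤ p α 3 t
    simp only [p]
    split_ifs with h1 h2 h3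
    · exact le_rfl
    · exact u_neg_nonneg hα0 (by linarith) (by linarith) htπ
    · -- t ∈ [2α, 3α)
      have h0t : 0 < Real.tan t := tan_pos_lt (by linarith) (by linarith)
      rw [show u α (-t) - 2 * Real.cos (2*α) * u (2*α) (-t)
            = (Real.cos (2*α) - 1/2) * (Real.tan (3*α) / Real.tan t - 1) from exprM hα h0t.ne']
      have h8 : Real.tan t ≤ Real.tan (3*α) := tan_le_tan_nn (by linarith) (by linarith) (by linarith)
      have : 1 ≤ Real.tan (3*α) / Real.tan t := (one_le_div h0t).2 h8
      nlinarith
    · exact le_rfl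

/-- the four probabilities sum to 1 on `(0, π)` -/
lemma sum_p {t : ℝ} (ht : t ∈ Set.Ioo 0 π) :
    p α 0 t + p α 1 t + p α 2 t + p α 3 t = 1 := by
  obtain ⟨ht0, htπ⟩ := ht
  have hα0 := hα.1
  have hα6 := hα.2
  have hpi := Real.pi_pos
  have hu1 := u_add_u_neg α t
  have hu2 := u_add_u_neg (2*α) t
  simp only [p]
  split_ifs <;> try linarith

/-- `p₁ > 0` on `(0, π - 2α)` -/
lemma p0_pos {t : ℝ} (h0 : 0 < t) (h1 : t < π - 2*α) : 0 < p α 0 t := by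
  have hα0 := hα.1
  have hα6 := hα.2
  have hpi := Real.pi_pos
  have h2c := cos2_gt hα
  show 0 < p α 0 t
  simp only [p]
  split_ifs with g1 g2 g3
  · norm_num
  · exact u_pos hα0 (by linarith) h0 (by linarith)
  · have := u_pos (show 0 < 2*α by linarith) (by linarith) h0 (by linarith)
    nlinarith

/-- `p₃ > 0` on `(2α, π)` -/
lemma p2_pos {t : ℝ} (h0 : 2*α < t) (h1 : t < π) : 0 < p α 2 t := by
  have hα0 := hα.1
  have hα6 := hα.2
  have hpi := Real.pi_pos
  have h2c := cos2_gt hα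
  show 0 < p α 2 t
  simp only [p]
  split_ifs with g1 g2 g3
  · linarith
  · have := u_neg_pos (show 0 < 2*α by linarith) (by linarith) h0 h1
    nlinarith
  · exact u_neg_pos hα0 (by linarith) (by linarith) h1
  · norm_num

/-- admissible images stay in `(0, π)` -/
lemma T_mem {t : ℝ} (ht : t ∈ Set.Ioo 0 π) {i : Fin 4} (hp : 0 < p α i t) :
    T α i t ∈ Set.Ioo 0 π := by
  obtain ⟨ht0, htπ⟩ := ht
  have hα0 := hα.1
  have hα6 := hα.2
  have hpi := Real.pi_pos
  fin_cases i
  · simp only [p] at hp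
    split_ifs at hp with g1 g2 g3
    · simp only [T, Set.mem_Ioo]; constructor <;> linarith
    · simp only [T, Set.mem_Ioo]; constructor <;> linarith
    · simp only [T, Set.mem_Ioo]; constructor <;> linarith
    · exact absurd hp (by norm_num)
  · simp only [p] at hp
    split_ifs at hp with g1 g2 g3
    · exact absurd hp (by norm_num)
    · simp only [T, Set.mem_Ioo]; constructor <;> linarith
    · simp only [T, Set.mem_Ioo]; constructor <;> linarith
    · exact absurd hp (by norm_num)
  · simp only [p] at hp
    split_ifs at hp with g1 g2 g3
    · exact absurd hp (by norm_num)
    · have h2t : 2*α < t := by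
        rcases eq_or_lt_of_le (not_lt.1 g1) with he | h
        · exfalso
          have htan : Real.tan (2*α) ≠ 0 :=
            (tan_pos_lt (by linarith) (by linarith)).ne'
          rw [← he, u_neg, div_self htan] at hp
          norm_num at hp
        · exact h
      simp only [T, Set.mem_Ioo]; constructor <;> linarith
    · simp only [T, Set.mem_Ioo]; constructor <;> linarith
    · simp only [T, Set.mem_Ioo]; constructor <;> linarith
  · simp only [p] at hp
    split_ifs at hp with g1 g2 g3
    · exact absurd hp (by norm_num)
    · have hat : α < t := by
        rcases eq_or_lt_of_le (not_lt.1 g1) with he | h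
        · exfalso
          have htan : Real.tan α ≠ 0 := (tan_pos_lt (by linarith) (by linarith)).ne'
          rw [← he, u_neg, div_self htan] at hp
          norm_num at hp
        · exact h
      simp only [T, Set.mem_Ioo]; constructor <;> linarith
    · simp only [T, Set.mem_Ioo]; constructor <;> linarith
    · exact absurd hp (by norm_num)

end Main

end RandomBilliard

namespace RBAux
open Real

/-- upward sweep -/
lemma sweep_up {q1 q2 z : ℝ} (h1 : 0 ≤ q1) (h12 : q1 < q2) (h2 : q2 ≤ 2*π)
    (hz : 0 < z) (hze : z < q2 - q1) {w : ℝ} (hw0 : 0 ≤ w) (hw2 : w < 2*π) :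
    ∃ j : ℕ, j ≤ ⌈(4*π)/z⌉₊ + 1 ∧ ∃ c : ℤ, w + j*z - c*(2*π) ∈ Set.Ioo q1 q2 := by
  have hpi := Real.pi_pos
  rcases lt_or_ge w q2 with hA | hB
  · rcases lt_or_ge q1 w with hq | hq
    · exact ⟨0, by positivity, 0, by constructor <;> (push_cast; linarith)⟩
    · set x := (q1 - w)/z with hxdef
      have hx0 : 0 ≤ x := by
        apply div_nonneg _ hz.le
        linarith
      refine ⟨⌊x⌋₊ + 1, ?_, 0, ?_, ?_⟩
      · have hle : x ≤ (4*π)/z := by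
          rw [div_le_div_iff_of_pos_right hz]
          linarith
        calc ⌊x⌋₊ + 1 ≤ ⌊(4*π)/z⌋₊ + 1 := by exact Nat.add_le_add_right (Nat.floor_mono hle) 1
          _ ≤ ⌈(4*π)/z⌉₊ + 1 := Nat.add_le_add_right (Nat.floor_le_ceil _) 1
      · have h3 : x < (⌊x⌋₊ : ℝ) + 1 := Nat.lt_floor_add_one x
        have : q1 - w < ((⌊x⌋₊ : ℝ) + 1) * z := by
          calc q1 - w = x * z := by rw [hxdef]; field_simp [hz.ne']
            _ < ((⌊x⌋₊ : ℝ) + 1) * z := by exact mul_lt_mul_of_pos_right h3 hz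
        push_cast
        linarith
      · have h4 : (⌊x⌋₊ : ℝ) ≤ x := Nat.floor_le hx0
        have : ((⌊x⌋₊ : ℝ) + 1) * z ≤ (q1 - w) + z := by
          have : x * z = q1 - w := by rw [hxdef]; field_simp [hz.ne']
          nlinarith
        push_cast
        linarith
  · set x := (q1 + 2*π - w)/z with hxdef
    have hx0 : 0 ≤ x := by
      apply div_nonneg _ hz.le
      linarith
    refine ⟨⌊x⌋₊ + 1, ?_, 1, ?_, ?_⟩
    · have hle : x ≤ (4*π)/z := by
        rw [div_le_div_iff_of_pos_right hz]
        linarith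
      calc ⌊x⌋₊ + 1 ≤ ⌊(4*π)/z⌋₊ + 1 := Nat.add_le_add_right (Nat.floor_mono hle) 1
        _ ≤ ⌈(4*π)/z⌉₊ + 1 := Nat.add_le_add_right (Nat.floor_le_ceil _) 1
    · have h3 : x < (⌊x⌋₊ : ℝ) + 1 := Nat.lt_floor_add_one x
      have : q1 + 2*π - w < ((⌊x⌋₊ : ℝ) + 1) * z := by
        have hxz : x * z = q1 + 2*π - w := by rw [hxdef]; field_simp [hz.ne']
        nlinarith
      push_cast
      linarith
    · have h4 : (⌊x⌋₊ : ℝ) ≤ x := Nat.floor_le hx0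
      have : ((⌊x⌋₊ : ℝ) + 1) * z ≤ (q1 + 2*π - w) + z := by
        have hxz : x * z = q1 + 2*π - w := by rw [hxdef]; field_simp [hz.ne']
        nlinarith
      push_cast
      linarith

/-- downward sweep -/
lemma sweep_down {q1 q2 z : ℝ} (h1 : 0 ≤ q1) (h12 : q1 < q2) (h2 : q2 ≤ 2*π)
    (hz : 0 < z) (hze : z < q2 - q1) {w : ℝ} (hw0 : 0 ≤ w) (hw2 : w < 2*π) :
    ∃ j : ℕ, j ≤ ⌈(4*π)/z⌉₊ + 1 ∧ ∃ c : ℤ, w - j*z - c*(2*π) ∈ Set.Ioo q1 q2 := by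
  have hpi := Real.pi_pos
  rcases lt_or_ge q1 w with hA | hB
  · rcases lt_or_ge w q2 with hq | hq
    · exact ⟨0, by positivity, 0, by constructor <;> (push_cast; linarith)⟩
    · set x := (w - q2)/z with hxdef
      have hx0 : 0 ≤ x := by
        apply div_nonneg _ hz.le
        linarith
      refine ⟨⌊x⌋₊ + 1, ?_, 0, ?_, ?_⟩
      · have hle : x ≤ (4*π)/z := by
          rw [div_le_div_iff_of_pos_right hz]
          linarith
        calc ⌊x⌋₊ + 1 ≤ ⌊(4*π)/z⌋₊ + 1 := Nat.add_le_add_right (Nat.floor_mono hle) 1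
          _ ≤ ⌈(4*π)/z⌉₊ + 1 := Nat.add_le_add_right (Nat.floor_le_ceil _) 1
      · have h4 : (⌊x⌋₊ : ℝ) ≤ x := Nat.floor_le hx0
        have hxz : x * z = w - q2 := by rw [hxdef]; field_simp [hz.ne']
        have : ((⌊x⌋₊ : ℝ) + 1) * z ≤ (w - q2) + z := by nlinarith
        push_cast
        linarith
      · have h3 : x < (⌊x⌋₊ : ℝ) + 1 := Nat.lt_floor_add_one x
        have hxz : x * z = w - q2 := by rw [hxdef]; field_simp [hz.ne']
        have : w - q2 < ((⌊x⌋₊ : ℝ) + 1) * z := by nlinarith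
        push_cast
        linarith
  · set x := (w - q2 + 2*π)/z with hxdef
    have hx0 : 0 ≤ x := by
      apply div_nonneg _ hz.le
      linarith
    refine ⟨⌊x⌋₊ + 1, ?_, -1, ?_, ?_⟩
    · have hle : x ≤ (4*π)/z := by
        rw [div_le_div_iff_of_pos_right hz]
        linarith
      calc ⌊x⌋₊ + 1 ≤ ⌊(4*π)/z⌋₊ + 1 := Nat.add_le_add_right (Nat.floor_mono hle) 1
        _ ≤ ⌈(4*π)/z⌉₊ + 1 := Nat.add_le_add_right (Nat.floor_le_ceil _) 1
    · have h4 : (⌊x⌋₊ : ℝ) ≤ x := Nat.floor_le hx0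
      have hxz : x * z = w - q2 + 2*π := by rw [hxdef]; field_simp [hz.ne']
      have : ((⌊x⌋₊ : ℝ) + 1) * z ≤ (w - q2 + 2*π) + z := by nlinarith
      push_cast
      linarith
    · have h3 : x < (⌊x⌋₊ : ℝ) + 1 := Nat.lt_floor_add_one x
      have hxz : x * z = w - q2 + 2*π := by rw [hxdef]; field_simp [hz.ne']
      have : w - q2 + 2*π < ((⌊x⌋₊ : ℝ) + 1) * z := by nlinarith
      push_cast
      linarith


/-- irrational rotation hits any interval of the circle within a uniformly bounded
number of forward steps -/
lemma rotation {γ : ℝ} (hirr : Irrational (γ / (2*π))) {q1 q2 : ℝ}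
    (h1 : 0 < q1) (h12 : q1 < q2) (h2 : q2 < 2*π) :
    ∃ R : ℕ, ∀ y : ℝ, ∃ r : ℕ, r ≤ R ∧
      toIcoMod Real.two_pi_pos 0 (y + r * γ) ∈ Set.Ioo q1 q2 := by
  have hpi := Real.pi_pos
  have h2pi : (2*π) ≠ 0 := by positivity
  -- the subgroup generated by γ and 2π is dense
  have hdense : Dense ((AddSubgroup.closure ({γ, 2*π} : Set ℝ) : AddSubgroup ℝ) : Set ℝ) := by
    rcases AddSubgroup.dense_or_cyclic (AddSubgroup.closure ({γ, 2*π} : Set ℝ)) with hd | ⟨a, ha⟩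
    · exact hd
    · exfalso
      have hγ : γ ∈ AddSubgroup.closure ({γ, 2*π} : Set ℝ) :=
        AddSubgroup.subset_closure (by simp)
      have h2 : (2*π) ∈ AddSubgroup.closure ({γ, 2*π} : Set ℝ) :=
        AddSubgroup.subset_closure (by simp)
      rw [ha, AddSubgroup.mem_closure_singleton] at hγ h2
      obtain ⟨k, hk⟩ := hγ
      obtain ⟨l, hl⟩ := h2
      rw [zsmul_eq_mul] at hk hl
      have hl0 : (l : ℝ) ≠ 0 := by
        intro h; rw [h, zero_mul] at hl; exact h2pi hl.symm
      refine hirr ⟨(k : ℚ)/(l : ℚ), ?_⟩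
      push_cast
      rw [div_eq_div_iff hl0 h2pi]
      linear_combination (l:ℝ) * hk - (k:ℝ) * hl
  -- get a small positive element
  obtain ⟨z, hzI, hzG⟩ : ∃ z ∈ Set.Ioo (0:ℝ) (q2 - q1),
      z ∈ (AddSubgroup.closure ({γ, 2*π} : Set ℝ) : AddSubgroup ℝ) := by
    obtain ⟨z, hz1, hz2⟩ := hdense.exists_mem_open isOpen_Ioo
      (Set.nonempty_Ioo.2 (by linarith : (0:ℝ) < q2 - q1))
    exact ⟨z, hz2, hz1⟩
  obtain ⟨hz0, hzlt⟩ := hzI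
  obtain ⟨k, l, hkl⟩ := AddSubgroup.mem_closure_pair.1 hzG
  rw [zsmul_eq_mul, zsmul_eq_mul] at hkl
  have hk0 : k ≠ 0 := by
    rintro rfl
    simp only [Int.cast_zero, zero_mul, zero_add] at hkl
    rcases le_or_gt l 0 with h | h
    · have : (l:ℝ) ≤ 0 := by exact_mod_cast h
      nlinarith
    · have : (1:ℝ) ≤ (l:ℝ) := by exact_mod_cast h
      nlinarith
  refine ⟨(⌈(4*π)/z⌉₊ + 1) * k.natAbs, fun y => ?_⟩
  set w := toIcoMod Real.two_pi_pos 0 y with hwdef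
  have hw : w ∈ Set.Ico 0 (2*π) := by
    simpa using toIcoMod_mem_Ico Real.two_pi_pos 0 y
  have hyw : y - w = toIcoDiv Real.two_pi_pos 0 y • (2*π) := self_sub_toIcoMod _ 0 y
  set d := toIcoDiv Real.two_pi_pos 0 y with hddef
  rw [zsmul_eq_mul] at hyw
  rcases hk0.lt_or_gt with hkneg | hkpos
  · -- k < 0 : downward sweep
    obtain ⟨j, hj, c, hc⟩ := sweep_down h1.le h12 h2.le hz0 hzlt hw.1 hw.2
    refine ⟨j * k.natAbs, Nat.mul_le_mul_right _ hj, ?_⟩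
    have hkabs : (k.natAbs : ℝ) = -(k : ℝ) := by
      rw [Nat.cast_natAbs]; simp [abs_of_neg (show (k:ℝ) < 0 by exact_mod_cast hkneg)]
    have key : y + (j * k.natAbs : ℕ) * γ
        = (w - j*z - c*(2*π)) + (d + j*l + c) • (2*π) := by
      push_cast [zsmul_eq_mul, hkabs]
      nlinarith [hkl, hyw]
    rw [key, toIcoMod_add_zsmul]
    rw [(toIcoMod_eq_self Real.two_pi_pos).2 ⟨by linarith [hc.1], by simpa using by linarith [hc.2]⟩]
    exact hc
  · -- k > 0 : upward sweep
    obtain ⟨j, hj, c, hc⟩ := sweep_up h1.le h12 h2.le hz0 hzlt hw.1 hw.2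
    refine ⟨j * k.natAbs, Nat.mul_le_mul_right _ hj, ?_⟩
    have hkabs : (k.natAbs : ℝ) = (k : ℝ) := by
      rw [Nat.cast_natAbs]; simp [abs_of_pos (show (0:ℝ) < (k:ℝ) by exact_mod_cast hkpos)]
    have key : y + (j * k.natAbs : ℕ) * γ
        = (w + j*z - c*(2*π)) + (d - j*l + c) • (2*π) := by
      push_cast [zsmul_eq_mul, hkabs]
      nlinarith [hkl, hyw]
    rw [key, toIcoMod_add_zsmul]
    rw [(toIcoMod_eq_self Real.two_pi_pos).2 ⟨by linarith [hc.1], by simpa using by linarith [hc.2]⟩]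
    exact hc

end RBAux

namespace RandomBilliard

/-- total mass of the kernel from `a` to the point `b` -/
noncomputable def kmass (α a b : ℝ) : ℝ≥0∞ :=
  ∑ i : Fin 4, ENNReal.ofReal (p α i a) * (if T α i a = b then 1 else 0)

lemma feresKernel_lintegral (α a : ℝ) (f : ℝ → ℝ≥0∞) :
    ∫⁻ x, f x ∂(feresKernel α a) = ∑ i : Fin 4, ENNReal.ofReal (p α i a) * f (T α i a) := by
  rw [feresKernel, MeasureTheory.lintegral_finset_sum_measure]
  refine Finset.sum_congr rfl fun i _ => ?_
  rw [MeasureTheory.lintegral_smul_measure, MeasureTheory.lintegral_dirac, smul_eq_mul]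

lemma cylProb_singleton (α : ℝ) :
    ∀ (M : ℕ) (v : ℕ → ℝ) (t : ℝ), cylProb (feresKernel α) M (fun k => {v k}) t
      = (if t = v 0 then 1 else 0) * ∏ k ∈ Finset.range M, kmass α (v k) (v (k+1)) := by
  intro M
  induction M with
  | zero =>
    intro v t
    show Set.indicator {v 0} (fun _ => (1:ℝ≥0∞)) t = _
    rw [Set.indicator_apply]
    simp [Set.mem_singleton_iff]
  | succ M ih =>
    intro v t
    show Set.indicator {v 0}
      (fun _ => ∫⁻ t', cylProb (feresKernel α) M (fun k => {v (k+1)}) t' ∂(feresKernel α t)) t = _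
    have h1 : ∫⁻ t', cylProb (feresKernel α) M (fun k => {v (k+1)}) t' ∂(feresKernel α t)
        = kmass α t (v 1) * ∏ k ∈ Finset.range M, kmass α (v (k+1)) (v (k+1+1)) := by
      rw [feresKernel_lintegral]
      have h2 : ∀ i : Fin 4, cylProb (feresKernel α) M (fun k => {v (k+1)}) (T α i t)
          = (if T α i t = v 1 then 1 else 0)
            * ∏ k ∈ Finset.range M, kmass α (v (k+1)) (v (k+1+1)) :=
        fun i => ih (fun k => v (k+1)) (T α i t)
      simp only [h2]
      rw [kmass, Finset.sum_mul]
      exact Finset.sum_congr rfl fun i _ => (mul_assoc _ _ _).symm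
    rw [Set.indicator_apply]
    simp only [Set.mem_singleton_iff]
    split_ifs with ht
    · rw [h1, Finset.prod_range_succ' (fun k => kmass α (v k) (v (k+1))) M, ht, one_mul]
      ring
    · rw [zero_mul]

lemma nu_cyl {α θ : ℝ} {ν : MeasureTheory.Measure (ℕ → ℝ)}
    (hν : IsMarkovPathMeasure (feresKernel α) (MeasureTheory.Measure.dirac θ) ν)
    (M : ℕ) (v : ℕ → ℝ) (hv0 : v 0 = θ) :
    ν {ω | ∀ k ≤ M, ω k = v k} = ∏ k ∈ Finset.range M, kmass α (v k) (v (k+1)) := by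
  have h := hν M (fun k => {v k}) (fun k => measurableSet_singleton _)
  simp only [Set.mem_singleton_iff] at h
  rw [h, MeasureTheory.lintegral_dirac, cylProb_singleton, hv0, if_pos rfl, one_mul]

lemma nu_univ {α θ : ℝ} {ν : MeasureTheory.Measure (ℕ → ℝ)}
    (hν : IsMarkovPathMeasure (feresKernel α) (MeasureTheory.Measure.dirac θ) ν) :
    ν Set.univ = 1 := by
  have h := hν 0 (fun _ => Set.univ) (fun _ => MeasurableSet.univ)
  have he : {ω : ℕ → ℝ | ∀ k ≤ 0, ω k ∈ Set.univ} = Set.univ := by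
    ext ω; simp
  rw [he] at h
  rw [h, MeasureTheory.lintegral_dirac]
  show Set.indicator Set.univ (fun _ => (1:ℝ≥0∞)) θ = 1
  simp

lemma nu_start {α θ : ℝ} {ν : MeasureTheory.Measure (ℕ → ℝ)}
    (hν : IsMarkovPathMeasure (feresKernel α) (MeasureTheory.Measure.dirac θ) ν) :
    ν {ω | ω 0 = θ} = 1 := by
  have h := hν 0 (fun _ => {θ}) (fun _ => measurableSet_singleton _)
  have he : {ω : ℕ → ℝ | ∀ k ≤ 0, ω k ∈ ({θ} : Set ℝ)} = {ω | ω 0 = θ} := by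
    ext ω
    simp [Nat.le_zero]
  rw [he] at h
  rw [h, MeasureTheory.lintegral_dirac]
  show Set.indicator {θ} (fun _ => (1:ℝ≥0∞)) θ = 1
  simp

end RandomBilliard

namespace RandomBilliard
open Real

open Classical in
/-- the finite state space: grid points `±θ + kη` inside `(0, π)` -/
noncomputable def stateS (θ η : ℝ) (n : ℕ) : Finset ℝ :=
  (((Finset.Icc (-(2*(n:ℤ))) (2*(n:ℤ))) ×ˢ ({true, false} : Finset Bool)).image
    (fun q => (if q.2 then θ else -θ) + (q.1 : ℝ) * η)).filter (fun x => 0 < x ∧ x < π)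

lemma stateS_mem_Ioo {θ η : ℝ} {n : ℕ} {x : ℝ} (hx : x ∈ stateS θ η n) :
    x ∈ Set.Ioo 0 π := by
  classical
  simp only [stateS, Finset.mem_filter] at hx
  exact ⟨hx.2.1, hx.2.2⟩

lemma stateS_rep {θ η : ℝ} {n : ℕ} {x : ℝ} (hx : x ∈ stateS θ η n) :
    ∃ (σ : Bool) (k : ℤ), x = (if σ then θ else -θ) + (k:ℝ) * η := by
  classical
  simp only [stateS, Finset.mem_filter, Finset.mem_image, Finset.mem_product] at hx
  obtain ⟨⟨q, _, hq⟩, _⟩ := hx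
  exact ⟨q.2, q.1, hq.symm⟩

lemma mem_stateS {θ η : ℝ} {n : ℕ} (hη : 0 < η) (hnη : (n:ℝ) * η = π)
    (hθ : 0 < θ) (hθπ : θ < π) (σ : Bool) (k : ℤ)
    (h0 : 0 < (if σ then θ else -θ) + (k:ℝ) * η)
    (h1 : (if σ then θ else -θ) + (k:ℝ) * η < π) :
    (if σ then θ else -θ) + (k:ℝ) * η ∈ stateS θ η n := by
  classical
  simp only [stateS, Finset.mem_filter, Finset.mem_image, Finset.mem_product]
  refine ⟨⟨(k, σ), ⟨?_, by simp⟩, rfl⟩, h0, h1⟩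
  rw [Finset.mem_Icc]
  have habs : -π < (if σ then θ else -θ) ∧ (if σ then θ else -θ) < π := by
    rcases σ with _|_ <;> constructor <;> simp <;> linarith
  have hb1 : (k:ℝ) * η < 2*π := by linarith [habs.1, habs.2]
  have hb2 : -(2*π) < (k:ℝ) * η := by linarith [habs.1, habs.2]
  rw [← hnη] at hb1 hb2
  have hk1 : (k:ℝ) < 2*(n:ℝ) := by
    have := (mul_lt_mul_iff_of_pos_right hη).1 (by linarith : (k:ℝ) * η < (2*(n:ℝ)) * η)
    linarith
  have hk2 : -(2*(n:ℝ)) < (k:ℝ) := by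
    have := (mul_lt_mul_iff_of_pos_right hη).1 (by linarith : (-(2*(n:ℝ))) * η < (k:ℝ) * η)
    linarith
  constructor
  · have : -(2*(n:ℤ)) < k := by exact_mod_cast hk2
    omega
  · have : k < 2*(n:ℤ) := by exact_mod_cast hk1
    omega

/-- the state space is closed under admissible transitions -/
lemma stateS_closed {α θ η : ℝ} {n m : ℕ} (hα : α ∈ Set.Ioo 0 (π/6))
    (hη : 0 < η) (hnη : (n:ℝ) * η = π) (hmη : α = (m:ℝ) * η)
    (hθ : 0 < θ) (hθπ : θ < π)
    {x : ℝ} (hx : x ∈ stateS θ η n) {i : Fin 4} (hp : 0 < p α i x) :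
    T α i x ∈ stateS θ η n := by
  obtain ⟨σ, k, hrep⟩ := stateS_rep hx
  have hIoo := T_mem hα (stateS_mem_Ioo hx) hp
  have h2π : 2*π = (((2*(n:ℤ)):ℤ):ℝ) * η := by push_cast; linarith [hnη]
  fin_cases i
  · have hIoo' : T α 0 x ∈ Set.Ioo 0 π := hIoo
    show T α 0 x ∈ stateS θ η n
    have e : T α 0 x = (if σ then θ else -θ) + ((k + 2*m : ℤ):ℝ) * η := by
      show x + 2*α = _
      rw [hrep, hmη]; push_cast; ring
    rw [e] at hIoo' ⊢
    exact mem_stateS hη hnη hθ hθπ σ _ hIoo'.1 hIoo'.2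
  · have hIoo' : T α 1 x ∈ Set.Ioo 0 π := hIoo
    show T α 1 x ∈ stateS θ η n
    have e : T α 1 x = (if !σ then θ else -θ) + ((-k + 2*n - 4*m : ℤ):ℝ) * η := by
      show -x + 2*π - 4*α = _
      rw [hrep, hmη]
      rcases σ with _|_ <;> simp <;> push_cast <;> linarith [hnη]
    rw [e] at hIoo' ⊢
    exact mem_stateS hη hnη hθ hθπ _ _ hIoo'.1 hIoo'.2
  · have hIoo' : T α 2 x ∈ Set.Ioo 0 π := hIoo
    show T α 2 x ∈ stateS θ η n
    have e : T α 2 x = (if σ then θ else -θ) + ((k - 2*m : ℤ):ℝ) * η := by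
      show x - 2*α = _
      rw [hrep, hmη]; push_cast; ring
    rw [e] at hIoo' ⊢
    exact mem_stateS hη hnη hθ hθπ σ _ hIoo'.1 hIoo'.2
  · have hIoo' : T α 3 x ∈ Set.Ioo 0 π := hIoo
    show T α 3 x ∈ stateS θ η n
    have e : T α 3 x = (if !σ then θ else -θ) + ((-k + 4*m : ℤ):ℝ) * η := by
      show -x + 4*α = _
      rw [hrep, hmη]
      rcases σ with _|_ <;> simp <;> push_cast <;> linarith [hnη]
    rw [e] at hIoo' ⊢
    exact mem_stateS hη hnη hθ hθπ _ _ hIoo'.1 hIoo'.2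

/-- total kernel mass within the state space is 1 -/
lemma sum_kmass {α θ η : ℝ} {n m : ℕ} (hα : α ∈ Set.Ioo 0 (π/6))
    (hη : 0 < η) (hnη : (n:ℝ) * η = π) (hmη : α = (m:ℝ) * η)
    (hθ : 0 < θ) (hθπ : θ < π)
    {a : ℝ} (ha : a ∈ stateS θ η n) :
    ∑ b ∈ stateS θ η n, kmass α a b = 1 := by
  classical
  have haI := stateS_mem_Ioo ha
  have hsum : ∑ b ∈ stateS θ η n, kmass α a b
      = ∑ i : Fin 4, ENNReal.ofReal (p α i a)
          * (if T α i a ∈ stateS θ η n then 1 else 0) := by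
    simp only [kmass]
    rw [Finset.sum_comm]
    refine Finset.sum_congr rfl fun i _ => ?_
    rw [← Finset.mul_sum]
    congr 1
    exact Finset.sum_ite_eq (stateS θ η n) (T α i a) (fun _ => 1)
  rw [hsum]
  have hterm : ∀ i : Fin 4, ENNReal.ofReal (p α i a)
      * (if T α i a ∈ stateS θ η n then 1 else 0) = ENNReal.ofReal (p α i a) := by
    intro i
    rcases lt_or_ge 0 (p α i a) with h | h
    · rw [if_pos (stateS_closed hα hη hnη hmη hθ hθπ ha h), mul_one]
    · rw [ENNReal.ofReal_eq_zero.2 h, zero_mul]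
  simp only [hterm]
  rw [Fin.sum_univ_four]
  rw [← ENNReal.ofReal_add (p_nonneg hα haI 0) (p_nonneg hα haI 1),
    ← ENNReal.ofReal_add (by linarith [p_nonneg hα haI 0, p_nonneg hα haI 1, p_nonneg hα haI 2]) (p_nonneg hα haI 2),
    ← ENNReal.ofReal_add (by linarith [p_nonneg hα haI 0, p_nonneg hα haI 1, p_nonneg hα haI 2]) (p_nonneg hα haI 3),
    sum_p hα haI, ENNReal.ofReal_one]

end RandomBilliard

namespace RandomBilliard
open Real

/-! ### Words, weights and avoidance -/

/-- weight of a path given by a list of states -/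
noncomputable def twl (α : ℝ) : ℝ → List ℝ → ℝ≥0∞
  | _, [] => 1
  | a, b :: l => kmass α a b * twl α b l

lemma twl_append (α : ℝ) : ∀ (l v : List ℝ) (a : ℝ),
    twl α a (l ++ v) = twl α a l * twl α (l.getLastD a) v
  | [], v, a => by simp [twl]
  | b :: l, v, a => by
    simp only [List.cons_append, twl, List.getLastD_cons, List.append_eq]
    rw [twl_append α l v b, mul_assoc]

lemma kmass_le (α a : ℝ) (i : Fin 4) : ENNReal.ofReal (p α i a) ≤ kmass α a (T α i a) := by
  rw [kmass]
  have h := Finset.single_le_sum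
    (f := fun j : Fin 4 => ENNReal.ofReal (p α j a) * (if T α j a = T α i a then 1 else 0))
    (fun j _ => zero_le) (Finset.mem_univ i)
  simpa using h

/-- all words of length `M` with letters in `S` -/
noncomputable def wordsS (S : Finset ℝ) : ℕ → Finset (List ℝ)
  | 0 => {[]}
  | M+1 => S.biUnion (fun b => (wordsS S M).image (b :: ·))

lemma mem_wordsS {S : Finset ℝ} : ∀ {M : ℕ} {l : List ℝ},
    l ∈ wordsS S M ↔ l.length = M ∧ ∀ x ∈ l, x ∈ S := by
  intro M
  induction M with
  | zero =>
    intro l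
    constructor
    · intro h
      simp only [wordsS, Finset.mem_singleton] at h
      subst h; simp
    · rintro ⟨h1, -⟩
      simp only [wordsS, Finset.mem_singleton]
      exact List.length_eq_zero_iff.1 h1
  | succ M ih =>
    intro l
    constructor
    · intro h
      simp only [wordsS, Finset.mem_biUnion, Finset.mem_image] at h
      obtain ⟨b, hb, l', hl', rfl⟩ := h
      obtain ⟨h1, h2⟩ := ih.1 hl'
      refine ⟨by simp [h1], ?_⟩
      intro x hx
      rcases List.mem_cons.1 hx with rfl | hx
      · exact hb
      · exact h2 x hx
    · rintro ⟨h1, h2⟩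
      cases l with
      | nil => simp at h1
      | cons b l' =>
        simp only [wordsS, Finset.mem_biUnion, Finset.mem_image]
        refine ⟨b, h2 b (by simp), l', ?_, rfl⟩
        refine ih.2 ⟨by simpa using h1, fun x hx => h2 x (by simp [hx])⟩

lemma wordsS_add (S : Finset ℝ) (M L : ℕ) :
    wordsS S (M + L) = (wordsS S M).biUnion (fun l => (wordsS S L).image (fun v => l ++ v)) := by
  ext w
  simp only [mem_wordsS, Finset.mem_biUnion, Finset.mem_image]
  constructor
  · rintro ⟨h1, h2⟩
    refine ⟨w.take M, ⟨?_, fun x hx => h2 x (List.mem_of_mem_take hx)⟩,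
      w.drop M, ⟨?_, fun x hx => h2 x (List.mem_of_mem_drop hx)⟩, List.take_append_drop M w⟩
    · rw [List.length_take, h1]; omega
    · rw [List.length_drop, h1]; omega
  · rintro ⟨l, ⟨hl1, hl2⟩, v, ⟨hv1, hv2⟩, rfl⟩
    refine ⟨by simp [hl1, hv1], fun x hx => ?_⟩
    rcases List.mem_append.1 hx with h | h
    · exact hl2 x h
    · exact hv2 x h

lemma sum_twl {α : ℝ} {S : Finset ℝ}
    (hker : ∀ a ∈ S, ∑ b ∈ S, kmass α a b = 1) :
    ∀ (M : ℕ) {a : ℝ}, a ∈ S → ∑ l ∈ wordsS S M, twl α a l = 1 := by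
  intro M
  induction M with
  | zero => intro a _; simp [wordsS, twl]
  | succ M ih =>
    intro a ha
    rw [wordsS]
    rw [Finset.sum_biUnion ?hd]
    case hd =>
      intro b hb b' hb' hne
      simp only [Finset.disjoint_left, Finset.mem_image]
      rintro l ⟨l1, _, rfl⟩ ⟨l2, _, he⟩
      refine hne ?_
      injection he with h1 _
      exact h1.symm
    have hsum : ∀ b ∈ S, ∑ l ∈ (wordsS S M).image (b :: ·), twl α a l = kmass α a b := by
      intro b hb
      rw [Finset.sum_image (fun x _ y _ h => by injection h)]
      have : ∀ l ∈ wordsS S M, twl α a (b :: l) = kmass α a b * twl α b l := fun l _ => rfl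
      rw [Finset.sum_congr rfl this, ← Finset.mul_sum, ih hb, mul_one]
    rw [Finset.sum_congr rfl hsum]
    exact hker a ha

/-- the avoidance predicate along a list of angles, with running phase -/
def avoids (q1 q2 : ℝ) : ℝ → List ℝ → Prop
  | _, [] => True
  | x, b :: l => (toIcoMod Real.two_pi_pos 0 (x + 2*b) ∉ Set.Ioo q1 q2) ∧ avoids q1 q2 (x + 2*b) l

lemma avoids_append (q1 q2 : ℝ) : ∀ (l v : List ℝ) (x : ℝ),
    avoids q1 q2 x (l ++ v) ↔ avoids q1 q2 x l ∧ avoids q1 q2 (x + 2*l.sum) v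
  | [], v, x => by simp [avoids]
  | b :: l, v, x => by
    simp only [List.cons_append, avoids, List.sum_cons, List.append_eq]
    rw [avoids_append q1 q2 l v (x + 2*b),
      show x + 2*b + 2*l.sum = x + 2*(b + l.sum) by ring]
    tauto

/-- list built from the first `M` values of a sequence -/
def listOf (f : ℕ → ℝ) : ℕ → List ℝ
  | 0 => []
  | M+1 => f 0 :: listOf (fun k => f (k+1)) M

lemma length_listOf : ∀ (M : ℕ) (f : ℕ → ℝ), (listOf f M).length = M
  | 0, _ => rfl
  | M+1, f => by simp [listOf, length_listOf M]

lemma mem_listOf : ∀ (M : ℕ) (f : ℕ → ℝ) (x : ℝ), x ∈ listOf f M → ∃ k, k < M ∧ x = f k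
  | 0, f, x => by simp [listOf]
  | M+1, f, x => by
    intro h
    rcases List.mem_cons.1 h with rfl | h
    · exact ⟨0, by omega, rfl⟩
    · obtain ⟨k, hk, rfl⟩ := mem_listOf M _ x h
      exact ⟨k+1, by omega, rfl⟩

lemma getD_listOf : ∀ (M : ℕ) (f : ℕ → ℝ) (j : ℕ), j < M → (listOf f M).getD j 0 = f j
  | 0, f, j => by omega
  | M+1, f, 0 => fun _ => rfl
  | M+1, f, (j+1) => fun h => by
    show (listOf (fun k => f (k+1)) M).getD j 0 = f (j+1)
    exact getD_listOf M _ j (by omega)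

lemma avoids_listOf (q1 q2 : ℝ) : ∀ (M : ℕ) (f : ℕ → ℝ) (x : ℝ),
    avoids q1 q2 x (listOf f M) ↔ ∀ j < M,
      toIcoMod Real.two_pi_pos 0 (x + 2*∑ k ∈ Finset.range (j+1), f k) ∉ Set.Ioo q1 q2
  | 0, f, x => by simp [listOf, avoids]
  | M+1, f, x => by
    simp only [listOf, avoids]
    rw [avoids_listOf q1 q2 M (fun k => f (k+1)) (x + 2*f 0)]
    constructor
    · rintro ⟨h0, hrest⟩ j hj
      cases j with
      | zero => simpa using h0
      | succ j' =>
        have := hrest j' (by omega)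
        rw [Finset.sum_range_succ' f (j'+1)]
        convert this using 3
        ring
    · intro h
      refine ⟨by simpa using h 0 (by omega), fun j hj => ?_⟩
      have := h (j+1) (by omega)
      rw [Finset.sum_range_succ' f (j+1)] at this
      convert this using 3
      ring

lemma twl_listOf (α : ℝ) : ∀ (M : ℕ) (c : ℕ → ℝ),
    twl α (c 0) (listOf (fun k => c (k+1)) M) = ∏ k ∈ Finset.range M, kmass α (c k) (c (k+1))
  | 0, c => by simp [listOf, twl]
  | M+1, c => by
    show kmass α (c 0) (c 1) * twl α (c 1) (listOf (fun k => c (k+2)) M) = _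
    rw [twl_listOf α M (fun k => c (k+1))]
    rw [Finset.prod_range_succ' (fun k => kmass α (c k) (c (k+1))) M]
    ring

/-! ### loops -/

/-- the basic loop `b → b+2α → b`, repeated `r` times -/
def loopL (α b : ℝ) : ℕ → List ℝ
  | 0 => []
  | r+1 => (b + 2*α) :: b :: loopL α b r

lemma length_loopL (α b : ℝ) : ∀ r, (loopL α b r).length = 2*r
  | 0 => rfl
  | r+1 => by simp [loopL, length_loopL α b r]; omega

lemma mem_loopL (α b : ℝ) : ∀ r x, x ∈ loopL α b r → x = b + 2*α ∨ x = b
  | 0, x => by simp [loopL]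
  | r+1, x => by
    intro h
    rcases List.mem_cons.1 h with rfl | h
    · exact Or.inl rfl
    rcases List.mem_cons.1 h with rfl | h
    · exact Or.inr rfl
    · exact mem_loopL α b r x h

lemma getLastD_loopL (α b : ℝ) : ∀ r (a : ℝ), (loopL α b r).getLastD a = if r = 0 then a else b
  | 0, a => rfl
  | r+1, a => by
    show ((b + 2*α) :: b :: loopL α b r).getLastD a = b
    rw [List.getLastD_cons, List.getLastD_cons, getLastD_loopL α b r b]
    split_ifs <;> rfl

lemma avoids_loopL {q1 q2 α b : ℝ} : ∀ (r : ℕ) (x : ℝ),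
    avoids q1 q2 x (loopL α b r) → ∀ j : ℕ, 1 ≤ j → j ≤ r →
      toIcoMod Real.two_pi_pos 0 (x + j*(4*b + 4*α)) ∉ Set.Ioo q1 q2
  | 0, x => by omega
  | r+1, x => by
    rintro ⟨h1, h2, h3⟩ j hj1 hj2
    rcases Nat.eq_or_lt_of_le hj1 with he | hlt
    · rw [show x + (j:ℝ)*(4*b+4*α) = x + 2*(b+2*α) + 2*b by rw [← he]; push_cast; ring]
      exact h2
    · have h4 : avoids q1 q2 (x + (4*b+4*α)) (loopL α b r) := by
        rw [show x + (4*b+4*α) = x + 2*(b+2*α) + 2*b by ring]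
        exact h3
      obtain ⟨j', rfl⟩ : ∃ j', j = j' + 1 := ⟨j - 1, by omega⟩
      have := avoids_loopL r (x + (4*b+4*α)) h4 j' (by omega) (by omega)
      rw [show x + (j'+1:ℕ)*(4*b+4*α) = x + (4*b+4*α) + j'*(4*b+4*α) by push_cast; ring]
      exact this

lemma twl_loopL_ge {α b : ℝ} {pm : ℝ≥0∞}
    (h1 : pm ≤ kmass α b (b + 2*α)) (h2 : pm ≤ kmass α (b + 2*α) b) :
    ∀ r, pm^(2*r) ≤ twl α b (loopL α b r)
  | 0 => by simp [loopL, twl]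
  | r+1 => by
    show pm^(2*(r+1)) ≤ kmass α b (b+2*α) * (kmass α (b+2*α) b * twl α b (loopL α b r))
    calc pm^(2*(r+1)) = pm * (pm * pm^(2*r)) := by ring
      _ ≤ _ := by
        exact mul_le_mul' h1 (mul_le_mul' h2 (twl_loopL_ge h1 h2 r))

end RandomBilliard

namespace RandomBilliard
open Real

lemma getLastD_mem {S : Finset ℝ} : ∀ (l : List ℝ) (a : ℝ), a ∈ S → (∀ x ∈ l, x ∈ S) →
    l.getLastD a ∈ S
  | [], a, ha, _ => ha
  | b :: l, a, ha, h => by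
    rw [List.getLastD_cons]
    exact getLastD_mem l b (h b (by simp)) (fun x hx => h x (by simp [hx]))

lemma listOf_getD : ∀ (l : List ℝ), listOf (fun j => l.getD j 0) l.length = l
  | [] => rfl
  | b :: l => by
    show b :: listOf (fun j => (b::l).getD (j+1) 0) l.length = b :: l
    congr 1
    show listOf (fun j => l.getD j 0) l.length = l
    exact listOf_getD l

lemma sum_Icc_eq_range (g : ℕ → ℝ) : ∀ j : ℕ,
    ∑ k ∈ Finset.Icc 1 (j+1), g k = ∑ k ∈ Finset.range (j+1), g (k+1)
  | 0 => by simp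
  | j+1 => by
    rw [Finset.sum_Icc_succ_top (by omega), sum_Icc_eq_range g j,
      Finset.sum_range_succ (fun k => g (k+1)) (j+1)]

lemma sum_ofReal_p {α : ℝ} (hα : α ∈ Set.Ioo 0 (π/6)) {a : ℝ} (haI : a ∈ Set.Ioo 0 π) :
    ∑ i : Fin 4, ENNReal.ofReal (p α i a) = 1 := by
  rw [Fin.sum_univ_four,
    ← ENNReal.ofReal_add (p_nonneg hα haI 0) (p_nonneg hα haI 1),
    ← ENNReal.ofReal_add (by linarith [p_nonneg hα haI 0, p_nonneg hα haI 1]) (p_nonneg hα haI 2),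
    ← ENNReal.ofReal_add
      (by linarith [p_nonneg hα haI 0, p_nonneg hα haI 1, p_nonneg hα haI 2]) (p_nonneg hα haI 3),
    sum_p hα haI, ENNReal.ofReal_one]

lemma cylProb_stateS {α θ η : ℝ} {n m : ℕ} (hα : α ∈ Set.Ioo 0 (π/6))
    (hη : 0 < η) (hnη : (n:ℝ) * η = π) (hmη : α = (m:ℝ) * η)
    (hθ : 0 < θ) (hθπ : θ < π) :
    ∀ (M : ℕ) (t : ℝ), t ∈ stateS θ η n →
      cylProb (feresKernel α) M (fun _ => (↑(stateS θ η n) : Set ℝ)) t = 1 := by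
  intro M
  induction M with
  | zero =>
    intro t ht
    show Set.indicator _ (fun _ => (1:ℝ≥0∞)) t = 1
    rw [Set.indicator_apply, if_pos (Finset.mem_coe.2 ht)]
  | succ M ih =>
    intro t ht
    show Set.indicator (↑(stateS θ η n))
      (fun _ => ∫⁻ t', cylProb (feresKernel α) M (fun _ => (↑(stateS θ η n) : Set ℝ)) t'
        ∂(feresKernel α t)) t = 1
    rw [Set.indicator_apply, if_pos (Finset.mem_coe.2 ht), feresKernel_lintegral]
    have hterm : ∀ i : Fin 4, ENNReal.ofReal (p α i t)
        * cylProb (feresKernel α) M (fun _ => (↑(stateS θ η n) : Set ℝ)) (T α i t)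
        = ENNReal.ofReal (p α i t) := by
      intro i
      rcases lt_or_ge 0 (p α i t) with h | h
      · rw [ih (T α i t) (stateS_closed hα hη hnη hmη hθ hθπ ht h), mul_one]
      · rw [ENNReal.ofReal_eq_zero.2 h, zero_mul]
    rw [Finset.sum_congr rfl (fun i _ => hterm i)]
    exact sum_ofReal_p hα (stateS_mem_Ioo ht)

end RandomBilliard

open RandomBilliard

/-- if `α = (m/n)π` is rational and `θ/π` is irrational, then for
`ν`-almost every sequence of angles of the Markov chain started at `θ`, the collision
points `s + 2Σ_{k=1}^n θ_k mod 2π` of the random billiard map in the circle are dense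
in `[0, 2π)`. -/
theorem ae_dense_orbit_rational (α : ℝ) (hα : α ∈ Set.Ioo 0 (π / 6))
    (m n : ℕ) (hm : 0 < m) (hn : 0 < n) (hrat : α = (m : ℝ) / (n : ℝ) * π)
    (θ : ℝ) (hθ : θ ∈ Set.Ioo 0 π) (hirr : Irrational (θ / π))
    (s : ℝ) (hs : s ∈ Set.Ico 0 (2 * π))
    (ν : Measure (ℕ → ℝ))
    (hν : IsMarkovPathMeasure (feresKernel α) (Measure.dirac θ) ν) :
    ∀ᵐ ω ∂ν, Set.Ico 0 (2 * π) ⊆ closure (Set.range fun j : ℕ =>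
      toIcoMod Real.two_pi_pos 0 (s + 2 * ∑ k ∈ Finset.Icc 1 (j + 1), ω k)) := by
  classical
  have hπ := Real.pi_pos
  obtain ⟨hθ0, hθπ⟩ := hθ
  have hα0 := hα.1
  have hα6 := hα.2
  have hn0 : (0:ℝ) < (n:ℝ) := by exact_mod_cast hn
  set η : ℝ := π / n with hηdef
  have hη : 0 < η := by positivity
  have hnη : (n:ℝ) * η = π := by rw [hηdef]; field_simp [hn0.ne']
  have hmη : α = (m:ℝ) * η := by rw [hrat, hηdef]; ring
  set S : Finset ℝ := stateS θ η n with hSdef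
  have hθS : θ ∈ S := by
    have h := mem_stateS (n := n) hη hnη hθ0 hθπ true 0 (by simp [hθ0]) (by simp [hθπ])
    simpa using h
  have hker : ∀ a ∈ S, ∑ b ∈ S, kmass α a b = 1 := fun a ha =>
    sum_kmass hα hη hnη hmη hθ0 hθπ ha
  have huniv : ν Set.univ = 1 := nu_univ hν
  have hmeas_start : MeasurableSet {ω : ℕ → ℝ | ω 0 = θ} := by
    have : {ω : ℕ → ℝ | ω 0 = θ} = (fun ω : ℕ → ℝ => ω 0) ⁻¹' {θ} := rfl
    rw [this]
    exact (measurable_pi_apply 0) (measurableSet_singleton θ)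
  have hN1 : ν {ω : ℕ → ℝ | ω 0 = θ}ᶜ = 0 := by
    rw [measure_compl hmeas_start (by rw [nu_start hν]; exact ENNReal.one_ne_top), huniv, nu_start hν,
      tsub_self]
  have hN2 : ν {ω : ℕ → ℝ | ∀ k, ω k ∈ (↑S : Set ℝ)}ᶜ = 0 := by
    have hfull : ∀ M : ℕ, ν {ω : ℕ → ℝ | ∀ k ≤ M, ω k ∈ (↑S : Set ℝ)}ᶜ = 0 := by
      intro M
      have hmeas : MeasurableSet {ω : ℕ → ℝ | ∀ k ≤ M, ω k ∈ (↑S : Set ℝ)} := by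
        have : {ω : ℕ → ℝ | ∀ k ≤ M, ω k ∈ (↑S : Set ℝ)}
            = ⋂ k ∈ {k : ℕ | k ≤ M}, (fun ω : ℕ → ℝ => ω k) ⁻¹' (↑S : Set ℝ) := by
          ext ω; simp
        rw [this]
        exact MeasurableSet.biInter (Set.to_countable _)
          (fun k _ => (measurable_pi_apply k) S.measurableSet)
      have hval : ν {ω : ℕ → ℝ | ∀ k ≤ M, ω k ∈ (↑S : Set ℝ)} = 1 := by
        rw [hν M (fun _ => ↑S) (fun _ => S.measurableSet), MeasureTheory.lintegral_dirac,
          cylProb_stateS hα hη hnη hmη hθ0 hθπ M θ hθS]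
      rw [measure_compl hmeas (by rw [hval]; exact ENNReal.one_ne_top), huniv, hval, tsub_self]
    have hsub : {ω : ℕ → ℝ | ∀ k, ω k ∈ (↑S : Set ℝ)}ᶜ
        ⊆ ⋃ M : ℕ, {ω : ℕ → ℝ | ∀ k ≤ M, ω k ∈ (↑S : Set ℝ)}ᶜ := by
      intro ω hω
      simp only [Set.mem_compl_iff, Set.mem_setOf_eq, not_forall] at hω
      obtain ⟨k0, hk0⟩ := hω
      refine Set.mem_iUnion.2 ⟨k0, ?_⟩
      simp only [Set.mem_compl_iff, Set.mem_setOf_eq, not_forall]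
      exact ⟨k0, le_rfl, hk0⟩
    exact measure_mono_null hsub (measure_iUnion_null hfull)
  have key : ∀ q1 q2 : ℝ, 0 < q1 → q1 < q2 → q2 < 2*π →
      ν {ω : ℕ → ℝ | ω 0 = θ ∧ (∀ k, ω k ∈ (↑S : Set ℝ)) ∧ ∀ j : ℕ,
        toIcoMod Real.two_pi_pos 0 (s + 2*∑ k ∈ Finset.Icc 1 (j+1), ω k) ∉ Set.Ioo q1 q2} = 0 := by
    intro q1 q2 hq1 hq12 hq2
    have hSIoo : ∀ a ∈ S, a ∈ Set.Ioo 0 π := fun a ha => stateS_mem_Ioo ha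
    have hSne : Nonempty ↥S := ⟨⟨θ, hθS⟩⟩
    -- base states
    set bf : ↥S → ℝ := fun a => if (a:ℝ) < π - 2*α then (a:ℝ) else (a:ℝ) - 2*α with hbfdef
    have hT0 : ∀ x : ℝ, T α 0 x = x + 2*α := fun _ => rfl
    have hT2 : ∀ x : ℝ, T α 2 x = x - 2*α := fun _ => rfl
    have hbfS : ∀ a : ↥S, bf a ∈ S ∧ 0 < bf a ∧ bf a < π - 2*α := by
      intro a
      obtain ⟨ha0, haπ⟩ := hSIoo (a:ℝ) a.2
      by_cases hc : (a:ℝ) < π - 2*α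
      · rw [hbfdef]; simp only [if_pos hc]
        exact ⟨a.2, ha0, hc⟩
      · push_neg at hc
        rw [hbfdef]; simp only [if_neg (not_lt.2 hc)]
        refine ⟨?_, by linarith, by linarith⟩
        have hmem := stateS_closed hα hη hnη hmη hθ0 hθπ a.2
          (p2_pos hα (by linarith) haπ)
        rw [hT2] at hmem
        exact hmem
    have hbp2S : ∀ a : ↥S, bf a + 2*α ∈ S := by
      intro a
      obtain ⟨hbS, hb0, hbπ⟩ := hbfS a
      have hmem := stateS_closed hα hη hnη hmη hθ0 hθπ hbS (p0_pos hα hb0 hbπ)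
      rw [hT0] at hmem
      exact hmem
    -- irrationality of the loop increment
    have hγirr : ∀ a : ↥S, Irrational ((4*(bf a) + 4*α) / (2*π)) := by
      intro a
      obtain ⟨σ, k, hrep⟩ := stateS_rep (hbfS a).1
      rw [hηdef] at hrep
      have hn' : (n:ℝ) ≠ 0 := by positivity
      rcases σ with _|_
      · -- σ = false : bf a = -θ + k π/n
        simp only [Bool.false_eq_true, if_false] at hrep
        have heq : (4*(bf a) + 4*α) / (2*π)
            = ((-2 : ℤ) : ℝ) * (θ/π) + ((((2*k + 2*(m:ℤ)) : ℤ) : ℚ) / ((n:ℤ) : ℚ) : ℚ) := by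
          rw [hrep, hrat]
          push_cast
          field_simp
          ring
        rw [heq]
        exact ((hirr.intCast_mul (by norm_num)).add_ratCast _)
      · simp only [if_true] at hrep
        have heq : (4*(bf a) + 4*α) / (2*π)
            = ((2 : ℤ) : ℝ) * (θ/π) + ((((2*k + 2*(m:ℤ)) : ℤ) : ℚ) / ((n:ℤ) : ℚ) : ℚ) := by
          rw [hrep, hrat]
          push_cast
          field_simp
          ring
        rw [heq]
        exact ((hirr.intCast_mul (by norm_num)).add_ratCast _)
    have hrot : ∀ a : ↥S, ∃ R : ℕ, ∀ y : ℝ, ∃ r : ℕ, r ≤ R ∧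
        toIcoMod Real.two_pi_pos 0 (y + r * (4*(bf a) + 4*α)) ∈ Set.Ioo q1 q2 :=
      fun a => RBAux.rotation (hγirr a) hq1 hq12 hq2
    choose Rf hRf using hrot
    set Rmax : ℕ := Finset.univ.sup Rf with hRmaxdef
    set L : ℕ := 2*(Rmax+1) + 1 with hLdef
    -- uniform lower bound on the used transition probabilities
    set pmf : ↥S → ℝ≥0∞ := fun c =>
      min (if (c:ℝ) < π - 2*α then ENNReal.ofReal (p α 0 c) else 1)
          (if 2*α < (c:ℝ) then ENNReal.ofReal (p α 2 c) else 1) with hpmfdef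
    have hSuniv : (Finset.univ : Finset ↥S).Nonempty := Finset.univ_nonempty
    set pm : ℝ≥0∞ := Finset.univ.inf' hSuniv pmf with hpmdef
    have hpm0 : 0 < pm := by
      rw [hpmdef, Finset.lt_inf'_iff]
      intro c _
      rw [hpmfdef]
      obtain ⟨hc0, hcπ⟩ := hSIoo (c:ℝ) c.2
      refine lt_min ?_ ?_
      · split_ifs with h
        · exact ENNReal.ofReal_pos.2 (p0_pos hα hc0 h)
        · norm_num
      · split_ifs with h
        · exact ENNReal.ofReal_pos.2 (p2_pos hα h hcπ)
        · norm_num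
    have hpmle0 : ∀ c : ↥S, (c:ℝ) < π - 2*α → pm ≤ ENNReal.ofReal (p α 0 c) := by
      intro c hc
      refine le_trans (Finset.inf'_le pmf (Finset.mem_univ c)) ?_
      rw [hpmfdef]
      exact le_trans (min_le_left _ _) (by rw [if_pos hc])
    have hpmle2 : ∀ c : ↥S, 2*α < (c:ℝ) → pm ≤ ENNReal.ofReal (p α 2 c) := by
      intro c hc
      refine le_trans (Finset.inf'_le pmf (Finset.mem_univ c)) ?_
      rw [hpmfdef]
      exact le_trans (min_le_right _ _) (by rw [if_pos hc])
    have hst1 : ∀ c : ↥S, (c:ℝ) < π - 2*α → pm ≤ kmass α c ((c:ℝ) + 2*α) := by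
      intro c hc
      refine le_trans (hpmle0 c hc) ?_
      have h := kmass_le α (c:ℝ) 0
      rw [hT0] at h
      exact h
    have hst2 : ∀ c : ↥S, 2*α < (c:ℝ) → pm ≤ kmass α c ((c:ℝ) - 2*α) := by
      intro c hc
      refine le_trans (hpmle2 c hc) ?_
      have h := kmass_le α (c:ℝ) 2
      rw [hT2] at h
      exact h
    -- the hitting lemma
    have hhit : ∀ a ∈ S, ∀ x : ℝ, ∃ v ∈ wordsS S L,
        ¬ avoids q1 q2 x v ∧ pm^L ≤ twl α a v := by
      intro a ha x
      set aa : ↥S := ⟨a, ha⟩ with haadef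
      obtain ⟨ha0, haπ⟩ := hSIoo a ha
      obtain ⟨hbS, hb0, hbπ⟩ := hbfS aa
      have hRle : Rf aa ≤ Rmax := Finset.le_sup (Finset.mem_univ aa)
      by_cases hc : a < π - 2*α
      · -- start the loop immediately, pad at the end
        have hba : bf aa = a := by rw [hbfdef]; simp only [haadef, if_pos hc]
        rw [hba] at hbS hb0 hbπ
        have haS2 : a + 2*α ∈ S := by have := hbp2S aa; rwa [hba] at this
        refine ⟨loopL α a (Rmax+1) ++ [a + 2*α], ?_, ?_, ?_⟩
        · rw [mem_wordsS]
          constructor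
          · rw [List.length_append, length_loopL]
            simp [hLdef]
          · intro y hy
            rcases List.mem_append.1 hy with h | h
            · rcases mem_loopL α a _ y h with rfl | rfl
              · exact haS2
              · exact ha
            · rw [List.mem_singleton.1 h]
              exact haS2
        · intro hav
          rw [avoids_append] at hav
          obtain ⟨r, hr, hmem⟩ := hRf aa (x + (4*a + 4*α))
          rw [hba] at hmem
          have := avoids_loopL (Rmax+1) x hav.1 (r+1) (by omega) (by omega)
          apply this
          rw [show x + ((r+1 : ℕ):ℝ)*(4*a+4*α) = (x + (4*a + 4*α)) + r*(4*a+4*α) by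
            push_cast; ring]
          exact hmem
        · rw [twl_append, getLastD_loopL]
          rw [if_neg (by omega : ¬ Rmax + 1 = 0)]
          have hw1 : pm^(2*(Rmax+1)) ≤ twl α a (loopL α a (Rmax+1)) := by
            refine twl_loopL_ge (hst1 aa hc) ?_ (Rmax+1)
            have h := hst2 ⟨a + 2*α, haS2⟩ (by simp; linarith)
            rw [show (a + 2*α) - 2*α = a by ring] at h
            exact h
          have hw2 : pm ≤ twl α a [a + 2*α] := by
            show pm ≤ kmass α a (a + 2*α) * twl α (a+2*α) []
            rw [show twl α (a+2*α) [] = 1 from rfl, mul_one]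
            exact hst1 aa hc
          calc pm^L = pm^(2*(Rmax+1)) * pm := by rw [hLdef, pow_succ]
            _ ≤ _ := mul_le_mul' hw1 hw2
      · -- one descending step, then loops
        push_neg at hc
        have hba : bf aa = a - 2*α := by
          rw [hbfdef]; simp only [haadef, if_neg (not_lt.2 hc)]
        rw [hba] at hbS hb0 hbπ
        have hbS2 : (a - 2*α) + 2*α ∈ S := by have := hbp2S aa; rwa [hba] at this
        refine ⟨(a - 2*α) :: loopL α (a - 2*α) (Rmax+1), ?_, ?_, ?_⟩
        · rw [mem_wordsS]
          constructor
          · rw [List.length_cons, length_loopL]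
          · intro y hy
            rcases List.mem_cons.1 hy with rfl | h
            · exact hbS
            · rcases mem_loopL α (a - 2*α) _ y h with rfl | rfl
              · exact hbS2
              · exact hbS
        · intro hav
          obtain ⟨hav1, hav2⟩ := hav
          obtain ⟨r, hr, hmem⟩ := hRf aa ((x + 2*(a - 2*α)) + (4*(a-2*α) + 4*α))
          rw [hba] at hmem
          have := avoids_loopL (Rmax+1) (x + 2*(a-2*α)) hav2 (r+1) (by omega) (by omega)
          apply this
          rw [show x + 2*(a-2*α) + ((r+1 : ℕ):ℝ)*(4*(a-2*α)+4*α)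
              = (x + 2*(a-2*α) + (4*(a-2*α) + 4*α)) + r*(4*(a-2*α)+4*α) by push_cast; ring]
          exact hmem
        · show pm^L ≤ kmass α a (a - 2*α) * twl α (a - 2*α) (loopL α (a-2*α) (Rmax+1))
          have hw0 : pm ≤ kmass α a (a - 2*α) := by
            have h := hst2 aa (by simp [haadef]; linarith)
            exact h
          have hw1 : pm^(2*(Rmax+1)) ≤ twl α (a-2*α) (loopL α (a-2*α) (Rmax+1)) := by
            refine twl_loopL_ge (hst1 ⟨a - 2*α, hbS⟩ hbπ) ?_ (Rmax+1)
            have h := hst2 ⟨(a - 2*α) + 2*α, hbS2⟩ (by simp; linarith)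
            rw [show ((a - 2*α) + 2*α) - 2*α = a - 2*α by ring] at h
            exact h
          calc pm^L = pm * pm^(2*(Rmax+1)) := by rw [hLdef]; ring
            _ ≤ _ := mul_le_mul' hw0 hw1
    -- the inner avoidance estimate
    set δ : ℝ≥0∞ := pm^L with hδdef
    have hδ0 : 0 < δ := ENNReal.pow_pos hpm0 L
    have hinner : ∀ a ∈ S, ∀ x : ℝ,
        (∑ v ∈ wordsS S L, if avoids q1 q2 x v then twl α a v else 0) ≤ 1 - δ := by
      intro a ha x
      obtain ⟨v₀, hv₀w, hv₀hit, hv₀wt⟩ := hhit a ha x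
      have hsplit := Finset.sum_filter_add_sum_filter_not (wordsS S L)
        (fun v => avoids q1 q2 x v) (fun v => twl α a v)
      rw [sum_twl hker L ha] at hsplit
      have h1 : (∑ v ∈ wordsS S L, if avoids q1 q2 x v then twl α a v else 0)
          = ∑ v ∈ (wordsS S L).filter (fun v => avoids q1 q2 x v), twl α a v :=
        (Finset.sum_filter _ _).symm
      have h2 : δ ≤ ∑ v ∈ (wordsS S L).filter (fun v => ¬ avoids q1 q2 x v), twl α a v :=
        le_trans hv₀wt (Finset.single_le_sum (fun _ _ => zero_le)
          (Finset.mem_filter.2 ⟨hv₀w, hv₀hit⟩))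
      rw [h1]
      have hpmne : pm ≠ ∞ := by
        refine ne_top_of_le_ne_top ?_ (Finset.inf'_le pmf (Finset.mem_univ ⟨θ, hθS⟩))
        rw [hpmfdef]
        refine ne_top_of_le_ne_top ?_ (min_le_right _ _)
        split_ifs
        · exact ENNReal.ofReal_ne_top
        · exact ENNReal.one_ne_top
      refine ENNReal.le_sub_of_add_le_right (by rw [hδdef]; exact ENNReal.pow_ne_top hpmne) ?_
      calc (∑ v ∈ (wordsS S L).filter (fun v => avoids q1 q2 x v), twl α a v) + δ
          ≤ (∑ v ∈ (wordsS S L).filter (fun v => avoids q1 q2 x v), twl α a v)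
            + ∑ v ∈ (wordsS S L).filter (fun v => ¬ avoids q1 q2 x v), twl α a v :=
            add_le_add le_rfl h2
        _ = 1 := hsplit
    -- the word sums
    set Q : ℕ → ℝ≥0∞ := fun M =>
      ∑ l ∈ wordsS S M, if avoids q1 q2 s l then twl α θ l else 0 with hQdef
    have hQ0 : Q 0 = 1 := by
      simp only [hQdef]
      show (∑ l ∈ ({[]} : Finset (List ℝ)), if avoids q1 q2 s l then twl α θ l else 0) = 1
      rw [Finset.sum_singleton, if_pos (show avoids q1 q2 s [] from trivial)]
      rfl
    have hstep : ∀ M, Q (M + L) ≤ (1 - δ) * Q M := by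
      intro M
      simp only [hQdef]
      rw [wordsS_add S M L, Finset.sum_biUnion ?hd]
      case hd =>
        intro l hl l' hl' hne
        simp only [Finset.disjoint_left, Finset.mem_image]
        rintro w ⟨v, _, rfl⟩ ⟨v', _, he⟩
        have hlen : l'.length = l.length := by
          rw [(mem_wordsS.1 (Finset.mem_coe.1 hl')).1, (mem_wordsS.1 (Finset.mem_coe.1 hl)).1]
        exact hne ((List.append_inj he hlen).1.symm)
      have hbound : ∀ l ∈ wordsS S M,
          (∑ w ∈ (wordsS S L).image (fun v => l ++ v),
            if avoids q1 q2 s w then twl α θ w else 0)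
          ≤ (1 - δ) * (if avoids q1 q2 s l then twl α θ l else 0) := by
        intro l hl
        rw [Finset.sum_image (fun x _ y _ h => List.append_cancel_left h)]
        obtain ⟨hlen, hmem⟩ := mem_wordsS.1 hl
        by_cases hav : avoids q1 q2 s l
        · rw [if_pos hav]
          have heq : ∀ v ∈ wordsS S L,
              (if avoids q1 q2 s (l ++ v) then twl α θ (l ++ v) else 0)
              = twl α θ l * (if avoids q1 q2 (s + 2*l.sum) v
                  then twl α (l.getLastD θ) v else 0) := by
            intro v _
            rw [avoids_append, twl_append]
            by_cases h2 : avoids q1 q2 (s + 2*l.sum) v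
            · rw [if_pos ⟨hav, h2⟩, if_pos h2]
            · rw [if_neg (fun hh => h2 hh.2), if_neg h2, mul_zero]
          rw [Finset.sum_congr rfl heq, ← Finset.mul_sum]
          rw [mul_comm (1 - δ) _]
          refine mul_le_mul' le_rfl ?_
          exact hinner (l.getLastD θ) (getLastD_mem l θ hθS hmem) (s + 2*l.sum)
        · rw [if_neg hav, mul_zero]
          refine le_of_eq (Finset.sum_eq_zero fun v _ => ?_)
          rw [if_neg]
          intro hh
          exact hav ((avoids_append q1 q2 l v s).1 hh).1
      calc (∑ l ∈ wordsS S M, ∑ w ∈ (wordsS S L).image (fun v => l ++ v),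
            if avoids q1 q2 s w then twl α θ w else 0)
          ≤ ∑ l ∈ wordsS S M, (1 - δ) * (if avoids q1 q2 s l then twl α θ l else 0) :=
            Finset.sum_le_sum hbound
        _ = (1 - δ) * Q M := by rw [← Finset.mul_sum]
    have hQk : ∀ k : ℕ, Q (k*L) ≤ (1 - δ)^k := by
      intro k
      induction k with
      | zero => simp [hQ0]
      | succ k ih =>
        have : (k+1)*L = k*L + L := by ring
        rw [this]
        calc Q (k*L + L) ≤ (1 - δ) * Q (k*L) := hstep (k*L)
          _ ≤ (1 - δ) * (1 - δ)^k := mul_le_mul' le_rfl ih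
          _ = (1 - δ)^(k+1) := by rw [pow_succ, mul_comm]
    -- bounding the event by cylinders
    set E : Set (ℕ → ℝ) := {ω : ℕ → ℝ | ω 0 = θ ∧ (∀ k, ω k ∈ (↑S : Set ℝ)) ∧ ∀ j : ℕ,
        toIcoMod Real.two_pi_pos 0 (s + 2*∑ k ∈ Finset.Icc 1 (j+1), ω k) ∉ Set.Ioo q1 q2}
      with hEdef
    have hEQ : ∀ M : ℕ, ν E ≤ Q M := by
      intro M
      have hsub : E ⊆ ⋃ l ∈ (wordsS S M).filter (fun l => avoids q1 q2 s l),
          {ω : ℕ → ℝ | ∀ j ≤ M, ω j = (if j = 0 then θ else l.getD (j-1) 0)} := by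
        intro ω hω
        obtain ⟨hω0, hωS, hωav⟩ := hω
        set l : List ℝ := listOf (fun k => ω (k+1)) M with hldef
        have hlw : l ∈ wordsS S M := by
          rw [mem_wordsS, hldef]
          refine ⟨length_listOf M _, fun y hy => ?_⟩
          obtain ⟨k, _, rfl⟩ := mem_listOf M _ y hy
          exact hωS (k+1)
        have hlav : avoids q1 q2 s l := by
          rw [hldef, avoids_listOf]
          intro j _
          have := hωav j
          rwa [sum_Icc_eq_range (fun k => ω k) j] at this
        refine Set.mem_biUnion (Finset.mem_coe.2 (Finset.mem_filter.2 ⟨hlw, hlav⟩)) ?_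
        intro j hj
        rcases Nat.eq_zero_or_pos j with rfl | hj0
        · simpa using hω0
        · rw [if_neg (by omega)]
          rw [hldef, getD_listOf M _ (j-1) (by omega)]
          congr 1
          omega
      refine le_trans (measure_mono hsub) ?_
      refine le_trans (measure_biUnion_finset_le _ _) ?_
      have hval : ∀ l ∈ (wordsS S M).filter (fun l => avoids q1 q2 s l),
          ν {ω : ℕ → ℝ | ∀ j ≤ M, ω j = (if j = 0 then θ else l.getD (j-1) 0)}
            = twl α θ l := by
        intro l hl
        obtain ⟨hlw, -⟩ := Finset.mem_filter.1 hl
        obtain ⟨hlen, -⟩ := mem_wordsS.1 hlw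
        set v : ℕ → ℝ := fun j => if j = 0 then θ else l.getD (j-1) 0 with hvdef
        have h1 : ν {ω : ℕ → ℝ | ∀ j ≤ M, ω j = v j}
            = ∏ k ∈ Finset.range M, kmass α (v k) (v (k+1)) :=
          nu_cyl hν M v (by simp [hvdef])
        rw [h1]
        have h2 := twl_listOf α M v
        have h3 : (fun k => v (k+1)) = fun k => l.getD k 0 := by
          funext k
          rw [hvdef]
          simp
        rw [h3] at h2
        have h4 : listOf (fun k => l.getD k 0) M = l := by
          rw [← hlen]
          exact listOf_getD l
        rw [h4] at h2
        have h5 : v 0 = θ := by simp [hvdef]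
        rw [h5] at h2
        exact h2.symm
      rw [Finset.sum_congr rfl hval]
      simp only [hQdef]
      exact le_of_eq (Finset.sum_filter _ _)
    have hδlt : 1 - δ < 1 := ENNReal.sub_lt_self ENNReal.one_ne_top one_ne_zero hδ0.ne'
    have hlim : Filter.Tendsto (fun k : ℕ => (1 - δ)^k) Filter.atTop (nhds 0) :=
      ENNReal.tendsto_pow_atTop_nhds_zero_of_lt_one hδlt
    have hE0 : ν E ≤ 0 :=
      ge_of_tendsto hlim (Filter.Eventually.of_forall fun k =>
        le_trans (hEQ (k*L)) (hQk k))
    exact le_antisymm hE0 (zero_le)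
  -- final assembly
  rw [MeasureTheory.ae_iff]
  have hcover : {ω : ℕ → ℝ | ¬ (Set.Ico 0 (2*π) ⊆ closure (Set.range fun j : ℕ =>
      toIcoMod Real.two_pi_pos 0 (s + 2 * ∑ k ∈ Finset.Icc 1 (j+1), ω k)))}
      ⊆ ({ω : ℕ → ℝ | ω 0 = θ}ᶜ ∪ {ω : ℕ → ℝ | ∀ k, ω k ∈ (↑S : Set ℝ)}ᶜ) ∪
        ⋃ qp : ℚ × ℚ, (if 0 < ((qp.1:ℝ)) ∧ ((qp.1:ℝ)) < ((qp.2:ℝ)) ∧ ((qp.2:ℝ)) < 2*π then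
          {ω : ℕ → ℝ | ω 0 = θ ∧ (∀ k, ω k ∈ (↑S : Set ℝ)) ∧ ∀ j : ℕ,
            toIcoMod Real.two_pi_pos 0 (s + 2*∑ k ∈ Finset.Icc 1 (j+1), ω k)
              ∉ Set.Ioo ((qp.1:ℝ)) ((qp.2:ℝ))} else ∅) := by
    intro ω hω
    by_cases h1 : ω 0 = θ
    case neg => exact Or.inl (Or.inl h1)
    by_cases h2 : ∀ k, ω k ∈ (↑S : Set ℝ)
    case neg => exact Or.inl (Or.inr h2)
    right
    rw [Set.mem_iUnion]
    by_contra hno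
    push_neg at hno
    apply hω
    intro y hy
    obtain ⟨hy0, hy2⟩ := hy
    rw [Metric.mem_closure_iff]
    intro ε hε
    have hmin : y < min (y + ε) (2*π) := lt_min (by linarith) hy2
    obtain ⟨q1, hq1a, hq1b⟩ := exists_rat_btwn hmin
    obtain ⟨q2, hq2a, hq2b⟩ := exists_rat_btwn hq1b
    have hq2min : ((q2:ℝ)) < min (y + ε) (2*π) := hq2b
    have hcond : 0 < ((q1:ℝ)) ∧ ((q1:ℝ)) < ((q2:ℝ)) ∧ ((q2:ℝ)) < 2*π :=
      ⟨by linarith, hq2a, lt_of_lt_of_le hq2min (min_le_right _ _)⟩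
    have hno' := hno (q1, q2)
    rw [if_pos hcond] at hno'
    have hx : ¬ ∀ j : ℕ,
        toIcoMod Real.two_pi_pos 0 (s + 2*∑ k ∈ Finset.Icc 1 (j+1), ω k)
          ∉ Set.Ioo ((q1:ℝ)) ((q2:ℝ)) := fun hc => hno' ⟨h1, h2, hc⟩
    push_neg at hx
    obtain ⟨j, hj⟩ := hx
    refine ⟨toIcoMod Real.two_pi_pos 0 (s + 2*∑ k ∈ Finset.Icc 1 (j+1), ω k),
      ⟨j, rfl⟩, ?_⟩
    obtain ⟨hja, hjb⟩ := hj
    rw [Real.dist_eq, abs_lt]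
    have hyε : ((q2:ℝ)) < y + ε := lt_of_lt_of_le hq2min (min_le_left _ _)
    constructor <;> linarith
  refine measure_mono_null hcover ?_
  refine measure_union_null (measure_union_null hN1 hN2) ?_
  refine measure_iUnion_null fun qp => ?_
  split_ifs with hcond
  · exact key _ _ hcond.1 hcond.2.1 hcond.2.2
  · exact measure_empty
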